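/- Let G be a connected oriented graph with all path counts finite, and let u be a vertex lying on at least one loop (f_{uu}^G(n) ≥ 1 for some n ≥ 1). Then R(G) < L_{uu}(G) if and only if ∑_{n≥1} f_{uu}^G(n) L_{uu}(G)^n > 1, the sum being taken in [0,∞]. -/

import Mathlib

open Filter Set
open scoped ENNReal NNReal

/-- An oriented graph: a set of vertices and arrows (at most one arrow `u → v`
for each ordered pair), every arrow joining two vertices of the graph. -/
structure OGraph (V : Type*) where
  verts : Set V
  Adj : V → V → Prop
  mem_of_adj : ∀ ⦃u v⦄, Adj u v → u ∈ verts ∧ v ∈ verts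

namespace OGraph

variable {V W : Type*}

/-- `H` is a subgraph of `G`. -/
def IsSubgraph (H G : OGraph V) : Prop :=
  H.verts ⊆ G.verts ∧ ∀ ⦃u v⦄, H.Adj u v → G.Adj u v

/-- The set of paths `(u_0, …, u_n)` of length `n` from `u` to `v` in `G`. -/
def pathSet (G : OGraph V) (u v : V) (n : ℕ) : Set (Fin (n + 1) → V) :=
  {f | f 0 = u ∧ f (Fin.last n) = v ∧ (∀ i, f i ∈ G.verts) ∧
    ∀ i : Fin n, G.Adj (f i.castSucc) (f i.succ)}

/-- `p_{uv}^G(n)`: the number of paths of length `n` from `u` to `v` in `G`. -/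
noncomputable def pCount (G : OGraph V) (u v : V) (n : ℕ) : ℕ :=
  (G.pathSet u v n).ncard

/-- All path counts of `G` are finite. -/
def FiniteCounts (G : OGraph V) : Prop := ∀ u v n, (G.pathSet u v n).Finite

/-- `G` is (strongly) connected: there is a path between any two vertices. -/
def Connected (G : OGraph V) : Prop :=
  ∀ u ∈ G.verts, ∀ v ∈ G.verts, ∃ n, (G.pathSet u v n).Nonempty

/-- The set of paths `(u_0, …, u_n)` from `u` to `v` avoiding `v` strictly in between. -/
def fpathSet (G : OGraph V) (u v : V) (n : ℕ) : Set (Fin (n + 1) → V) :=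
  {f ∈ G.pathSet u v n | ∀ i : Fin (n + 1), i ≠ 0 → i ≠ Fin.last n → f i ≠ v}

/-- `f_{uv}^G(n)`: the number of paths `(u_0, …, u_n)` with `u_0 = u`, `u_n = v` and
`u_i ≠ v` for `0 < i < n` (set to `0` for `n = 0`). -/
noncomputable def fCount (G : OGraph V) (u v : V) (n : ℕ) : ℕ :=
  if n = 0 then 0 else (G.fpathSet u v n).ncard

/-- The radius of convergence of the power series `∑ a_n zⁿ`. -/
noncomputable def radius (a : ℕ → ℕ) : ℝ≥0∞ :=
  ⨆ (r : ℝ≥0) (_ : ∃ C : ℝ, ∀ n, (a n : ℝ) * (r : ℝ) ^ n ≤ C), (r : ℝ≥0∞)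

/-- `R_{uv}(G)`: the radius of convergence of `∑ p_{uv}^G(n) zⁿ`. -/
noncomputable def pRadius (G : OGraph V) (u v : V) : ℝ≥0∞ := radius (G.pCount u v)

/-- `L_{uv}(G)`: the radius of convergence of `∑_{n ≥ 1} f_{uv}^G(n) zⁿ`. -/
noncomputable def fRadius (G : OGraph V) (u v : V) : ℝ≥0∞ := radius (G.fCount u v)

/-- `R(G)`; for a connected graph it coincides with every `R_{uv}(G)`. -/
noncomputable def gRadius (G : OGraph V) : ℝ≥0∞ :=
  ⨅ u ∈ G.verts, ⨅ v ∈ G.verts, G.pRadius u v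

/-- The Gurevich entropy `h(G) = - log R(G)`. -/
noncomputable def entropy (G : OGraph V) : EReal := - ENNReal.log G.gRadius

/-- The exponential growth rate `limsup (1/n) log a_n` (with `log 0 = -∞`). -/
noncomputable def egrowth (a : ℕ → ℕ) : EReal :=
  Filter.atTop.limsup fun n : ℕ => (((n : ℝ)⁻¹ : ℝ) : EReal) * ENNReal.log ((a n : ℝ≥0∞))

/-- The entropy of a (not necessarily connected) graph:
`sup_{u ∈ V(H)} limsup (1/n) log p_{uu}^H(n)`. -/
noncomputable def supEntropy (G : OGraph V) : EReal :=
  ⨆ u ∈ G.verts, egrowth (G.pCount u u)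

/-- `∑_{n ≥ 1} f_{uu}^G(n) xⁿ`, in `[0, ∞]`. -/
noncomputable def loopSum (G : OGraph V) (u : V) (x : ℝ≥0∞) : ℝ≥0∞ :=
  ∑' n : ℕ, (G.fCount u u n : ℝ≥0∞) * x ^ n

/-- `∑_{n ≥ 1} n f_{uu}^G(n) xⁿ`, in `[0, ∞]`. -/
noncomputable def loopMeanSum (G : OGraph V) (u : V) (x : ℝ≥0∞) : ℝ≥0∞ :=
  ∑' n : ℕ, (n : ℝ≥0∞) * (G.fCount u u n : ℝ≥0∞) * x ^ n

/-- A connected graph is transient if `∑_{n ≥ 1} f_{uu}^G(n) R(G)ⁿ < 1`. -/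
def Transient (G : OGraph V) : Prop := ∀ u ∈ G.verts, G.loopSum u G.gRadius < 1

/-- A connected graph is recurrent if `∑_{n ≥ 1} f_{uu}^G(n) R(G)ⁿ = 1`. -/
def Recurrent (G : OGraph V) : Prop := ∀ u ∈ G.verts, G.loopSum u G.gRadius = 1

/-- Positive recurrent: recurrent and `∑_{n ≥ 1} n f_{uu}^G(n) R(G)ⁿ < ∞`. -/
def PosRecurrent (G : OGraph V) : Prop :=
  G.Recurrent ∧ ∀ u ∈ G.verts, G.loopMeanSum u G.gRadius < ⊤

/-- Null recurrent: recurrent and `∑_{n ≥ 1} n f_{uu}^G(n) R(G)ⁿ = ∞`. -/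
def NullRecurrent (G : OGraph V) : Prop :=
  G.Recurrent ∧ ∀ u ∈ G.verts, G.loopMeanSum u G.gRadius = ⊤

/-- `G` embeds in `H` via `ι` (`G ⊂ H` after identifying `V(G)` with its image). -/
def Embeds (G : OGraph V) (H : OGraph W) (ι : V → W) : Prop :=
  Function.Injective ι ∧ (∀ v ∈ G.verts, ι v ∈ H.verts) ∧
    ∀ ⦃u v⦄, G.Adj u v → H.Adj (ι u) (ι v)

/-- `G` embeds in `H` via `ι` as a proper subgraph (`G ⊊ H`). -/
def ProperEmbeds (G : OGraph V) (H : OGraph W) (ι : V → W) : Prop :=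
  G.Embeds H ι ∧
    ¬ ((∀ w ∈ H.verts, w ∈ ι '' G.verts) ∧ ∀ ⦃a b⦄, H.Adj (ι a) (ι b) → G.Adj a b)

end OGraph

namespace RLAux
open OGraph

variable {V : Type*}

/-- Concatenation of two finite paths, totalized. -/
def app (m n : ℕ) {c : ℕ} (f : Fin (m+1) → V) (g : Fin (c+1) → V) : Fin (n+1) → V :=
  fun i => if (i:ℕ) < m then f ⟨min (i:ℕ) m, by omega⟩ else g ⟨min ((i:ℕ) - m) c, by omega⟩

lemma app_left {m n c : ℕ} (f : Fin (m+1) → V) (g : Fin (c+1) → V) (i : Fin (n+1))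
    (hi : (i:ℕ) < m) : app m n f g i = f ⟨(i:ℕ), by omega⟩ := by
  simp only [app, if_pos hi]
  congr 1
  exact Fin.ext (min_eq_left hi.le)

lemma app_right {m n c : ℕ} (f : Fin (m+1) → V) (g : Fin (c+1) → V) (i : Fin (n+1))
    (h1 : m ≤ (i:ℕ)) (h2 : (i:ℕ) - m ≤ c) : app m n f g i = g ⟨(i:ℕ) - m, by omega⟩ := by
  simp only [app, if_neg (by omega : ¬ (i:ℕ) < m)]
  congr 1
  exact Fin.ext (min_eq_left h2)

lemma app_path {G : OGraph V} {v w x : V} {m c n : ℕ} (hc : m + c = n)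
    {f : Fin (m+1) → V} {g : Fin (c+1) → V}
    (hf : f ∈ G.pathSet v w m) (hg : g ∈ G.pathSet w x c) (hfg : f (Fin.last m) = g 0) :
    app m n f g ∈ G.pathSet v x n := by
  obtain ⟨hf0, hfl, hfv, hfa⟩ := hf
  obtain ⟨hg0, hgl, hgv, hga⟩ := hg
  refine ⟨?_, ?_, ?_, ?_⟩
  · rcases Nat.eq_zero_or_pos m with hm | hm
    · subst hm
      rw [app_right _ _ _ (by omega) (by omega)]
      have hgv0 : g 0 = v := by
        rw [← hfg, show (Fin.last 0 : Fin 1) = 0 from rfl, hf0]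
      rw [← hgv0]
      congr 1
    · rw [app_left _ _ _ (by simpa using hm)]
      exact hf0
  · rw [app_right _ _ _ (by simp; omega) (by simp; omega)]
    rw [← hgl]
    congr 1
    exact Fin.ext (by simp; omega)
  · intro i
    by_cases h : (i:ℕ) < m
    · rw [app_left _ _ _ h]; exact hfv _
    · rw [app_right _ _ _ (by omega) (by omega)]; exact hgv _
  · intro i
    rcases lt_trichotomy ((i:ℕ) + 1) m with h | h | h
    · rw [app_left _ _ _ (show ((i.castSucc : Fin (n+1)) : ℕ) < m by simp; omega),
        app_left _ _ _ (show ((i.succ : Fin (n+1)) : ℕ) < m by simp; omega)]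
      convert hfa ⟨(i:ℕ), by omega⟩ using 2 <;>
        exact Fin.ext (by simp only [Fin.val_succ, Fin.coe_castSucc, Fin.val_mk] <;> omega)
    · -- i+1 = m : boundary
      rw [app_left _ _ _ (show ((i.castSucc : Fin (n+1)) : ℕ) < m by simp; omega),
        app_right _ _ _ (show m ≤ ((i.succ : Fin (n+1)) : ℕ) by simp; omega) (by simp; omega)]
      have hadj := hfa ⟨(i:ℕ), by omega⟩
      rw [show (⟨(i:ℕ), by omega⟩ : Fin m).succ = Fin.last m from Fin.ext (by simp; omega),
        hfg] at hadj
      convert hadj using 2 <;>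
        exact Fin.ext (by simp only [Fin.val_succ, Fin.coe_castSucc, Fin.val_mk, Fin.val_zero] <;> omega)
    · -- m < i+1 : both on g side
      rw [app_right _ _ _ (show m ≤ ((i.castSucc : Fin (n+1)) : ℕ) by simp; omega)
          (by simp; omega),
        app_right _ _ _ (show m ≤ ((i.succ : Fin (n+1)) : ℕ) by simp; omega) (by simp; omega)]
      convert hga ⟨(i:ℕ) - m, by omega⟩ using 2 <;>
        exact Fin.ext (by simp only [Fin.val_succ, Fin.coe_castSucc, Fin.val_mk] <;> omega)

def take (m n : ℕ) (f : Fin (n+1) → V) : Fin (m+1) → V :=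
  fun i => f ⟨min (i:ℕ) n, by omega⟩

def drop (m n : ℕ) (f : Fin (n+1) → V) : Fin ((n-m)+1) → V :=
  fun j => f ⟨min (m+(j:ℕ)) n, by omega⟩

lemma take_val {m n : ℕ} (f : Fin (n+1) → V) (i : Fin (m+1)) (h : (i:ℕ) ≤ n) :
    take m n f i = f ⟨(i:ℕ), by omega⟩ := by
  unfold take; congr 1; exact Fin.ext (min_eq_left h)

lemma drop_val {m n : ℕ} (f : Fin (n+1) → V) (j : Fin ((n-m)+1)) (h : m + (j:ℕ) ≤ n) :
    drop m n f j = f ⟨m + (j:ℕ), by omega⟩ := by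
  unfold drop; congr 1; exact Fin.ext (min_eq_left h)

lemma app_take_drop {m n : ℕ} (hm : m ≤ n) (f : Fin (n+1) → V) :
    app m n (take m n f) (drop m n f) = f := by
  funext i
  by_cases h : (i:ℕ) < m
  · rw [app_left _ _ _ h, take_val _ _ (by simp; omega)]
  · rw [app_right _ _ _ (by omega) (by omega), drop_val _ _ (by simp; omega)]
    congr 1
    exact Fin.ext (by simp; omega)

lemma ncard_prod {α β : Type*} (s : Set α) (t : Set β) :
    (s ×ˢ t).ncard = s.ncard * t.ncard := by
  rw [← Nat.card_coe_set_eq, ← Nat.card_coe_set_eq, ← Nat.card_coe_set_eq,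
    ← Nat.card_prod]
  exact Nat.card_congr (Equiv.Set.prod s t)

lemma ncard_biUnion {α ι : Type*} [DecidableEq ι] (t : Finset ι) (A : ι → Set α)
    (hfin : ∀ i ∈ t, (A i).Finite)
    (hdisj : ∀ i ∈ t, ∀ j ∈ t, i ≠ j → Disjoint (A i) (A j)) :
    (⋃ i ∈ t, A i).ncard = ∑ i ∈ t, (A i).ncard := by
  classical
  induction t using Finset.induction_on with
  | empty => simp
  | @insert a s ha ih =>
    rw [Finset.set_biUnion_insert, Set.ncard_union_eq ?disj ?f1 ?f2, ih
      (fun i hi => hfin i (Finset.mem_insert_of_mem hi))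
      (fun i hi j hj hij => hdisj i (Finset.mem_insert_of_mem hi) j
        (Finset.mem_insert_of_mem hj) hij), Finset.sum_insert ha]
    case disj =>
      refine Set.disjoint_iUnion_right.2 fun i => Set.disjoint_iUnion_right.2 fun hi => ?_
      exact hdisj a (Finset.mem_insert_self a s) i (Finset.mem_insert_of_mem hi)
        (fun h => ha (h ▸ hi))
    case f1 => exact hfin a (Finset.mem_insert_self a s)
    case f2 =>
      exact Set.Finite.biUnion s.finite_toSet
        (fun i hi => hfin i (Finset.mem_insert_of_mem hi))

variable {G : OGraph V} {u : V}

lemma fpath_subset (G : OGraph V) (u v : V) (n : ℕ) :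
    G.fpathSet u v n ⊆ G.pathSet u v n := fun _ h => h.1

lemma pCount_zero (hu : u ∈ G.verts) : G.pCount u u 0 = 1 := by
  have : G.pathSet u u 0 = {fun _ => u} := by
    ext f
    constructor
    · rintro ⟨h0, -, -, -⟩
      funext i
      rw [show i = 0 from Fin.ext (Nat.lt_one_iff.1 i.isLt), h0]
    · rintro rfl
      exact ⟨rfl, rfl, fun _ => hu, fun i => i.elim0⟩
  rw [pCount, this, Set.ncard_singleton]

/-- The renewal equation. -/
lemma renewal (hfin : G.FiniteCounts) (hu : u ∈ G.verts) {n : ℕ} (hn : 1 ≤ n) :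
    G.pCount u u n = ∑ m ∈ Finset.Icc 1 n, G.fCount u u m * G.pCount u u (n - m) := by
  classical
  set A : ℕ → Set (Fin (n+1) → V) := fun m =>
    (fun p : (Fin (m+1) → V) × (Fin ((n-m)+1) → V) => app m n p.1 p.2) ''
      ((G.fpathSet u u m) ×ˢ (G.pathSet u u (n-m))) with hA
  -- key property: elements of A m return to u for the first time exactly at m
  have hval : ∀ m, m ∈ Finset.Icc 1 n → ∀ x ∈ A m,
      (x ⟨min m n, by omega⟩ = u) ∧ ∀ k, 1 ≤ k → k < m → x ⟨min k n, by omega⟩ ≠ u := by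
    intro m hm x hx
    obtain ⟨⟨g, h⟩, ⟨hg, hh⟩, rfl⟩ := hx
    simp only [Finset.mem_Icc] at hm
    constructor
    · show app m n g h _ = u
      rw [show (⟨min m n, by omega⟩ : Fin (n+1)) = ⟨m, by omega⟩ from
        Fin.ext (min_eq_left hm.2),
        app_right _ _ _ (by simp) (by simp),
        show (⟨(⟨m, by omega⟩ : Fin (n+1)).1 - m, by omega⟩ : Fin ((n-m)+1)) = 0 from
          Fin.ext (by simp)]
      exact hh.1
    · intro k hk1 hk2
      show app m n g h _ ≠ u
      rw [show (⟨min k n, by omega⟩ : Fin (n+1)) = ⟨k, by omega⟩ from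
        Fin.ext (min_eq_left (by omega)),
        app_left _ _ _ (by simpa using hk2)]
      exact hg.2 ⟨k, by omega⟩ (by simp [Fin.ext_iff]; omega) (by simp [Fin.ext_iff]; omega)
  -- decomposition
  have hdecomp : G.pathSet u u n = ⋃ m ∈ Finset.Icc 1 n, A m := by
    ext f
    constructor
    · intro hf
      obtain ⟨hf0, hfl, hfv, hfa⟩ := hf
      have hex : ∃ m, 1 ≤ m ∧ m ≤ n ∧ f ⟨min m n, by omega⟩ = u := by
        refine ⟨n, hn, le_rfl, ?_⟩
        rw [show (⟨min n n, by omega⟩ : Fin (n+1)) = Fin.last n from Fin.ext (by simp)]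
        exact hfl
      obtain ⟨N, hN1, hNn, hNu, hNmin⟩ : ∃ N, 1 ≤ N ∧ N ≤ n ∧
          (f ⟨min N n, by omega⟩ = u) ∧ ∀ k, 1 ≤ k → k < N → f ⟨min k n, by omega⟩ ≠ u := by
        obtain ⟨h1, h2, h3⟩ := Nat.find_spec hex
        exact ⟨Nat.find hex, h1, h2, h3,
          fun k hk1 hk2 hku => Nat.find_min hex hk2 ⟨hk1, by omega, hku⟩⟩
      refine Set.mem_biUnion (Finset.mem_Icc.2 ⟨hN1, hNn⟩) ?_
      refine ⟨(take N n f, drop N n f), Set.mem_prod.2 ⟨⟨⟨?_, ?_, fun i => hfv _,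
        fun i => ?_⟩, ?_⟩, ⟨?_, ?_, fun j => hfv _, fun j => ?_⟩⟩, app_take_drop hNn f⟩
      all_goals dsimp only
      · rw [take_val _ _ (by simp)]
        convert hf0 using 2 <;> exact Fin.ext (by simp)
      · rw [take_val _ _ (by simp; omega)]
        convert hNu using 2 <;> exact Fin.ext (by simp; omega)
      · -- adjacency of take
        rw [take_val _ _ (by simp; omega), take_val _ _ (by simp; omega)]
        convert hfa ⟨(i:ℕ), by omega⟩ using 2 <;>
          exact Fin.ext (by simp only [Fin.val_succ, Fin.coe_castSucc, Fin.val_mk] <;> omega)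
      · -- take avoids u in the middle
        intro i hi0 hil
        rw [take_val _ _ (le_trans (Nat.lt_succ_iff.mp i.isLt) hNn)]
        have hi1 : 1 ≤ (i:ℕ) := by
          rcases Nat.eq_zero_or_pos (i:ℕ) with h | h
          · exact absurd (Fin.ext h) hi0
          · exact h
        have hiN : (i:ℕ) < N := by
          have h2 : (i:ℕ) ≤ N := by omega
          rcases h2.lt_or_eq with h | h
          · exact h
          · refine absurd (Fin.ext ?_) hil
            simp only [Fin.val_last]
            exact h
        intro hc
        refine hNmin _ hi1 hiN ?_
        rw [show (⟨min (i:ℕ) n, by omega⟩ : Fin (n+1)) =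
            ⟨(i:ℕ), by omega⟩ from Fin.ext (min_eq_left (by omega))]
        exact hc
      · -- drop starts at u
        rw [drop_val _ _ (by simp; omega)]
        convert hNu using 2 <;> exact Fin.ext (by simp; omega)
      · -- drop ends at u
        rw [drop_val _ _ (by simp; omega)]
        convert hfl using 2 <;> exact Fin.ext (by simp; omega)
      · -- adjacency of drop
        rw [drop_val _ _ (by simp; omega), drop_val _ _ (by simp; omega)]
        convert hfa ⟨N + (j:ℕ), by omega⟩ using 2 <;>
          exact Fin.ext (by simp only [Fin.val_succ, Fin.coe_castSucc, Fin.val_mk] <;> omega)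
    · intro hf
      obtain ⟨m, hm, hx⟩ := Set.mem_iUnion₂.1 hf
      have hm' := Finset.mem_Icc.1 (Finset.mem_coe.1 hm)
      obtain ⟨⟨g, h⟩, hmem, rfl⟩ := hx
      obtain ⟨hg, hh⟩ := Set.mem_prod.1 hmem
      show app m n g h ∈ G.pathSet u u n
      refine app_path (by omega) hg.1 hh ?_
      exact hg.1.2.1.trans hh.1.symm
  have hfinA : ∀ m ∈ Finset.Icc 1 n, (A m).Finite := fun m _ =>
    (Set.Finite.prod ((hfin u u m).subset (fpath_subset G u u m))
      (hfin u u (n-m))).image _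
  have hdisjA : ∀ m ∈ Finset.Icc 1 n, ∀ m' ∈ Finset.Icc 1 n, m ≠ m' →
      Disjoint (A m) (A m') := by
    have key : ∀ m ∈ Finset.Icc 1 n, ∀ m' ∈ Finset.Icc 1 n, m < m' →
        Disjoint (A m) (A m') := by
      intro m hm m' hm' hlt
      rw [Set.disjoint_left]
      intro x hx hx'
      exact (hval m' hm' x hx').2 m (Finset.mem_Icc.1 hm).1 hlt (hval m hm x hx).1
    intro m hm m' hm' hne
    rcases hne.lt_or_gt with h | h
    · exact key m hm m' hm' h
    · exact (key m' hm' m hm h).symm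
  rw [OGraph.pCount, hdecomp, ncard_biUnion _ _ hfinA hdisjA]
  refine Finset.sum_congr rfl fun m hm => ?_
  have hm' := Finset.mem_Icc.1 hm
  have hinj : Set.InjOn (fun p : (Fin (m+1) → V) × (Fin ((n-m)+1) → V) => app m n p.1 p.2)
      ((G.fpathSet u u m) ×ˢ (G.pathSet u u (n-m))) := by
    rintro ⟨g, h⟩ hgh ⟨g', h'⟩ hgh' heq
    obtain ⟨hg, hh⟩ := Set.mem_prod.1 hgh
    obtain ⟨hg', hh'⟩ := Set.mem_prod.1 hgh'
    have heq' : ∀ i : Fin (n+1), app m n g h i = app m n g' h' i :=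
      fun i => congrFun heq i
    have hgg : g = g' := by
      funext i
      by_cases hi : (i:ℕ) < m
      · have := heq' ⟨(i:ℕ), by omega⟩
        rw [app_left g h ⟨(i:ℕ), by omega⟩ (by simpa using hi),
          app_left g' h' ⟨(i:ℕ), by omega⟩ (by simpa using hi)] at this
        convert this using 2 <;> exact Fin.ext rfl
      · have hieq : i = Fin.last m := Fin.ext (by simp; omega)
        rw [hieq, show g (Fin.last m) = u from hg.1.2.1,
          show g' (Fin.last m) = u from hg'.1.2.1]
    have hhh : h = h' := by
      funext j
      have hj : m + (j:ℕ) ≤ n := by have := j.isLt; omega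
      have := heq' ⟨m + (j:ℕ), by omega⟩
      rw [app_right _ _ _ (by simp) (by simp; omega),
        app_right _ _ _ (by simp) (by simp; omega)] at this
      convert this using 2 <;> exact Fin.ext (by simp)
    rw [Prod.ext_iff]
    exact ⟨hgg, hhh⟩
  rw [show A m = _ from rfl, Set.ncard_image_of_injOn hinj, ncard_prod,
    OGraph.fCount, if_neg (by omega), OGraph.pCount]

/-- Sandwiching a `v-w` path between a fixed `u-v` path and a fixed `w-u` path. -/
lemma pCount_le (hfin : G.FiniteCounts) {v w : V} {a b : ℕ}
    {P₁ : Fin (a+1) → V} (hP₁ : P₁ ∈ G.pathSet u v a)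
    {P₂ : Fin (b+1) → V} (hP₂ : P₂ ∈ G.pathSet w u b) (n : ℕ) :
    G.pCount v w n ≤ G.pCount u u (a + n + b) := by
  classical
  set Φ : (Fin (n+1) → V) → (Fin (a+n+b+1) → V) := fun h =>
    app a (a+n+b) P₁ (app n (n+b) h P₂) with hΦ
  have hmaps : ∀ h ∈ G.pathSet v w n, Φ h ∈ G.pathSet u u (a+n+b) := by
    intro h hh
    have hinner : app n (n+b) h P₂ ∈ G.pathSet v u (n+b) :=
      app_path rfl hh hP₂ (by rw [hh.2.1, hP₂.1])
    exact app_path (by omega) hP₁ hinner (by rw [hP₁.2.1, hinner.1])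
  have hinj : Set.InjOn Φ (G.pathSet v w n) := by
    intro h hh h' hh' heq
    funext j
    by_cases hjn : (j:ℕ) < n
    · have e1 : ∀ g : Fin (n+1) → V, Φ g ⟨a + (j:ℕ), by omega⟩ = g ⟨(j:ℕ), by omega⟩ := by
        intro g
        rw [hΦ]
        show app a (a+n+b) P₁ (app n (n+b) g P₂) ⟨a + (j:ℕ), by omega⟩ = _
        rw [app_right P₁ (app n (n+b) g P₂) ⟨a + (j:ℕ), by omega⟩ (by simp) (by simp; omega)]
        rw [show (⟨(⟨a + (j:ℕ), by omega⟩ : Fin (a+n+b+1)).1 - a, by simp; omega⟩ :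
            Fin ((n+b)+1)) = ⟨(j:ℕ), by omega⟩ from Fin.ext (by simp)]
        rw [app_left g P₂ ⟨(j:ℕ), by omega⟩ (by simpa using hjn)]
      have := (e1 h).symm.trans ((congrFun heq ⟨a + (j:ℕ), by omega⟩).trans (e1 h'))
      convert this using 2 <;> exact Fin.ext rfl
    · have hjn' : j = Fin.last n := Fin.ext (by simp; omega)
      rw [hjn', hh.2.1, hh'.2.1]
  exact Set.ncard_le_ncard_of_injOn Φ hmaps hinj (hfin u u (a+n+b))

lemma pRadius_le (hfin : G.FiniteCounts) (hconn : G.Connected) (hu : u ∈ G.verts)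
    {v w : V} (hv : v ∈ G.verts) (hw : w ∈ G.verts) :
    G.pRadius u u ≤ G.pRadius v w := by
  obtain ⟨a, P₁, hP₁⟩ := hconn u hu v hv
  obtain ⟨b, P₂, hP₂⟩ := hconn w hw u hu
  rw [OGraph.pRadius, OGraph.radius]
  refine iSup_le fun s => iSup_le fun hs => ?_
  rcases eq_or_ne s 0 with rfl | hs0
  · simp
  obtain ⟨C, hC⟩ := hs
  have hspos : (0:ℝ) < (s:ℝ) ^ (a+b) := by positivity
  rw [OGraph.pRadius, OGraph.radius]
  refine le_iSup_of_le s (le_iSup_of_le ⟨C / (s:ℝ)^(a+b), fun n => ?_⟩ le_rfl)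
  have h1 : (G.pCount v w n : ℝ) ≤ (G.pCount u u (a+n+b) : ℝ) := by
    exact_mod_cast pCount_le hfin hP₁ hP₂ n
  have h2 : (G.pCount u u (a+n+b) : ℝ) * (s:ℝ)^(a+n+b) ≤ C := hC (a+n+b)
  rw [le_div_iff₀ hspos]
  calc (G.pCount v w n : ℝ) * (s:ℝ)^n * (s:ℝ)^(a+b)
      = (G.pCount v w n : ℝ) * (s:ℝ)^(a+n+b) := by
        rw [mul_assoc, ← pow_add]
        congr 2
        omega
    _ ≤ (G.pCount u u (a+n+b) : ℝ) * (s:ℝ)^(a+n+b) := by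
        apply mul_le_mul_of_nonneg_right h1 (by positivity)
    _ ≤ C := h2

end RLAux




namespace RLAux
open OGraph
variable {V : Type*} {G : OGraph V} {u : V}

lemma loopSum_zero : G.loopSum u 0 = 0 := by
  rw [OGraph.loopSum]
  convert tsum_zero with n
  rcases n with - | n
  · simp [OGraph.fCount]
  · simp

lemma renewal_ennreal (hfin : G.FiniteCounts) (hu : u ∈ G.verts) {n : ℕ} (hn : 1 ≤ n)
    (x : ℝ≥0∞) :
    (G.pCount u u n : ℝ≥0∞) * x^n =
      ∑ m ∈ Finset.Icc 1 n, ((G.fCount u u m : ℝ≥0∞) * x^m) *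
        ((G.pCount u u (n-m) : ℝ≥0∞) * x^(n-m)) := by
  rw [renewal hfin hu hn]
  push_cast
  rw [Finset.sum_mul]
  refine Finset.sum_congr rfl fun m hm => ?_
  have hm' := Finset.mem_Icc.1 hm
  rw [show x^n = x^m * x^(n-m) by rw [← pow_add]; congr 1; omega]
  ring

lemma loopSum_eq_iSup (x : ℝ≥0∞) :
    G.loopSum u x = ⨆ M : ℕ, ∑ m ∈ Finset.Icc 1 M, (G.fCount u u m : ℝ≥0∞) * x^m := by
  rw [OGraph.loopSum]
  apply le_antisymm
  · rw [ENNReal.tsum_eq_iSup_sum]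
    refine iSup_le fun s => le_iSup_of_le (s.sup id) ?_
    have hsub : s ⊆ insert 0 (Finset.Icc 1 (s.sup id)) := by
      intro m hm
      rcases Nat.eq_zero_or_pos m with rfl | h
      · exact Finset.mem_insert_self _ _
      · exact Finset.mem_insert_of_mem (Finset.mem_Icc.2 ⟨h, Finset.le_sup (f := id) hm⟩)
    refine le_trans (Finset.sum_le_sum_of_subset hsub) ?_
    rw [Finset.sum_insert (by simp)]
    rw [show (G.fCount u u 0 : ℝ≥0∞) = 0 by simp [OGraph.fCount]]
    simp
  · exact iSup_le fun M => ENNReal.sum_le_tsum _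

lemma key_ineq (hfin : G.FiniteCounts) (hu : u ∈ G.verts) (x : ℝ≥0∞) (M K : ℕ) :
    1 + (∑ m ∈ Finset.Icc 1 M, (G.fCount u u m : ℝ≥0∞) * x^m) *
        (∑ j ∈ Finset.range K, (G.pCount u u j : ℝ≥0∞) * x^j) ≤
      ∑' n, (G.pCount u u n : ℝ≥0∞) * x^n := by
  classical
  set a : ℕ → ℝ≥0∞ := fun m => (G.fCount u u m : ℝ≥0∞) * x^m with ha
  set b : ℕ → ℝ≥0∞ := fun j => (G.pCount u u j : ℝ≥0∞) * x^j with hb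
  have hstep : (∑ m ∈ Finset.Icc 1 M, a m) * (∑ j ∈ Finset.range K, b j)
      ≤ ∑ n ∈ Finset.Icc 1 (M + K), b n := by
    rw [Finset.sum_mul_sum]
    rw [← Finset.sum_product']
    set e : ℕ × ℕ → (_ : ℕ) × ℕ := fun p => ⟨p.1 + p.2, p.1⟩ with he
    have hinj : ∀ p ∈ Finset.Icc 1 M ×ˢ Finset.range K,
        ∀ q ∈ Finset.Icc 1 M ×ˢ Finset.range K, e p = e q → p = q := by
      intro p _ q _ h
      have h1 : p.1 + p.2 = q.1 + q.2 := congrArg Sigma.fst h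
      have h2 : p.1 = q.1 := by
        have := congrArg (fun z : (_ : ℕ) × ℕ => z.2) h
        simpa using this
      exact Prod.ext h2 (by omega)
    have himg : (Finset.Icc 1 M ×ˢ Finset.range K).image e ⊆
        (Finset.Icc 1 (M+K)).sigma (fun n => Finset.Icc 1 n) := by
      intro q hq
      obtain ⟨⟨m0, j0⟩, hp, rfl⟩ := Finset.mem_image.1 hq
      obtain ⟨hp1, hp2⟩ := Finset.mem_product.1 hp
      have h1 := Finset.mem_Icc.1 hp1
      have h2 := Finset.mem_range.1 hp2
      simp only [he, Finset.mem_sigma, Finset.mem_Icc] at *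
      omega
    calc ∑ p ∈ Finset.Icc 1 M ×ˢ Finset.range K, a p.1 * b p.2
        = ∑ q ∈ (Finset.Icc 1 M ×ˢ Finset.range K).image e, a q.2 * b (q.1 - q.2) := by
          rw [Finset.sum_image hinj]
          refine Finset.sum_congr rfl fun p _ => ?_
          simp [he]
      _ ≤ ∑ q ∈ (Finset.Icc 1 (M+K)).sigma (fun n => Finset.Icc 1 n),
            a q.2 * b (q.1 - q.2) := Finset.sum_le_sum_of_subset himg
      _ = ∑ n ∈ Finset.Icc 1 (M+K), ∑ m ∈ Finset.Icc 1 n, a m * b (n - m) :=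
          Finset.sum_sigma _ _ _
      _ = ∑ n ∈ Finset.Icc 1 (M+K), b n := by
          refine Finset.sum_congr rfl fun n hn => ?_
          exact (renewal_ennreal hfin hu (Finset.mem_Icc.1 hn).1 x).symm
  have hone : b 0 = 1 := by simp [hb, pCount_zero hu]
  calc 1 + (∑ m ∈ Finset.Icc 1 M, a m) * (∑ j ∈ Finset.range K, b j)
      ≤ 1 + ∑ n ∈ Finset.Icc 1 (M + K), b n := by exact add_le_add_right hstep 1
    _ = ∑ n ∈ insert 0 (Finset.Icc 1 (M+K)), b n := by
        rw [Finset.sum_insert (by simp), hone]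
    _ ≤ ∑' n, b n := ENNReal.sum_le_tsum _

lemma tsum_p_top (hfin : G.FiniteCounts) (hu : u ∈ G.verts) {r : ℝ≥0}
    (hF : 1 ≤ G.loopSum u ↑r) :
    ∑' n, (G.pCount u u n : ℝ≥0∞) * (r:ℝ≥0∞)^n = ∞ := by
  by_contra hP
  set P := ∑' n, (G.pCount u u n : ℝ≥0∞) * (r:ℝ≥0∞)^n with hPdef
  have h1 : 1 + G.loopSum u ↑r * P ≤ P := by
    have hPs : P = ⨆ K : ℕ, ∑ j ∈ Finset.range K, (G.pCount u u j : ℝ≥0∞) * (r:ℝ≥0∞)^j :=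
      ENNReal.tsum_eq_iSup_nat
    conv_lhs => rw [loopSum_eq_iSup, hPs]
    rw [ENNReal.iSup_mul]
    simp only [ENNReal.mul_iSup]
    rw [ENNReal.add_iSup]
    refine iSup_le fun M => ?_
    rw [ENNReal.add_iSup]
    refine iSup_le fun K => ?_
    exact key_ineq hfin hu (↑r) M K
  have hP1 : (1:ℝ≥0∞) ≤ P := le_trans le_self_add h1
  have h2 : P ≤ G.loopSum u ↑r * P := by
    calc P = 1 * P := (one_mul P).symm
      _ ≤ G.loopSum u ↑r * P := mul_le_mul_left hF P
  have h3 : P < P := by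
    calc P < P + 1 := ENNReal.lt_add_right hP one_ne_zero
      _ = 1 + P := by ring
      _ ≤ 1 + G.loopSum u ↑r * P := add_le_add_right h2 1
      _ ≤ P := h1
  exact absurd h3 (lt_irrefl P)

lemma pRadius_le_of_top {r : ℝ≥0}
    (hP : ∑' n, (G.pCount u u n : ℝ≥0∞) * (r:ℝ≥0∞)^n = ∞) :
    G.pRadius u u ≤ ↑r := by
  by_contra hlt
  push_neg at hlt
  rw [OGraph.pRadius, OGraph.radius, lt_iSup_iff] at hlt
  obtain ⟨s, hs⟩ := hlt
  rw [lt_iSup_iff] at hs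
  obtain ⟨⟨C, hC⟩, hrs⟩ := hs
  have hrs' : r < s := by exact_mod_cast hrs
  have hs0 : (0:ℝ≥0) < s := lt_of_le_of_lt (zero_le : (0:ℝ≥0) ≤ r) hrs'
  set q : ℝ≥0 := r / s with hq
  have hq1 : q < 1 := by rw [hq, div_lt_one hs0]; exact hrs'
  have hCnn : ∀ n, (G.pCount u u n : ℝ≥0) * s^n ≤ C.toNNReal := by
    intro n
    rw [← NNReal.coe_le_coe]
    push_cast
    refine le_trans (hC n) ?_
    rw [Real.coe_toNNReal']
    exact le_max_left _ _
  have hterm : ∀ n, (G.pCount u u n : ℝ≥0∞) * (r:ℝ≥0∞)^n ≤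
      (C.toNNReal : ℝ≥0∞) * (q:ℝ≥0∞)^n := by
    intro n
    have hr : r = q * s := by rw [hq, div_mul_cancel₀ r hs0.ne']
    have hnn : (G.pCount u u n : ℝ≥0) * r^n ≤ C.toNNReal * q^n := by
      calc (G.pCount u u n : ℝ≥0) * r^n = ((G.pCount u u n : ℝ≥0) * s^n) * q^n := by
            rw [hr, mul_pow]; ring
        _ ≤ C.toNNReal * q^n := mul_le_mul_left (hCnn n) _
    exact_mod_cast ENNReal.coe_le_coe.2 hnn
  have htop : (⊤:ℝ≥0∞) ≤ (C.toNNReal : ℝ≥0∞) * (1 - (q:ℝ≥0∞))⁻¹ := by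
    rw [← ENNReal.tsum_geometric, ← ENNReal.tsum_mul_left, ← hP]
    exact Summable.tsum_le_tsum hterm ENNReal.summable ENNReal.summable
  have hne : (C.toNNReal : ℝ≥0∞) * (1 - (q:ℝ≥0∞))⁻¹ ≠ ⊤ := by
    refine ENNReal.mul_ne_top ENNReal.coe_ne_top (ENNReal.inv_ne_top.2 ?_)
    rw [ne_eq, tsub_eq_zero_iff_le]
    exact fun h => absurd (lt_of_lt_of_le (ENNReal.coe_lt_one_iff.2 hq1) h) (lt_irrefl _)
  exact hne (top_le_iff.1 htop)

end RLAux


namespace RLAux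
open OGraph
variable {V : Type*} {G : OGraph V} {u : V}

lemma loopSum_lt_one (hloop : ∃ n, 1 ≤ n ∧ 1 ≤ G.fCount u u n) {L : ℝ≥0∞}
    (hFL : G.loopSum u L ≤ 1) {r : ℝ≥0} (hr : ↑r < L) : G.loopSum u ↑r < 1 := by
  obtain ⟨n₀, hn₀, hf₀⟩ := hloop
  have split : ∀ x : ℝ≥0∞, G.loopSum u x = (G.fCount u u n₀ : ℝ≥0∞) * x^n₀ +
      ∑' n, if n = n₀ then 0 else (G.fCount u u n : ℝ≥0∞) * x^n := by
    intro x
    have h1 : ∑' n, (if n = n₀ then (G.fCount u u n : ℝ≥0∞) * x^n else 0) =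
        (G.fCount u u n₀ : ℝ≥0∞) * x^n₀ := by
      rw [tsum_eq_single n₀ (fun b' hb' => if_neg hb')]
      simp
    rw [OGraph.loopSum, ← h1, ← ENNReal.tsum_add]
    exact tsum_congr fun n => by by_cases h : n = n₀ <;> simp [h]
  have hdecL := split L
  have hdecr := split (↑r)
  have hRL_le : (∑' n, if n = n₀ then 0 else (G.fCount u u n : ℝ≥0∞) * L^n) ≤ 1 := by
    refine le_trans ?_ hFL
    rw [hdecL]
    exact le_add_self
  have hrest : (∑' n, if n = n₀ then 0 else (G.fCount u u n : ℝ≥0∞) * (↑r:ℝ≥0∞)^n) ≤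
      (∑' n, if n = n₀ then 0 else (G.fCount u u n : ℝ≥0∞) * L^n) := by
    refine Summable.tsum_le_tsum (fun n => ?_) ENNReal.summable ENNReal.summable
    by_cases h : n = n₀
    · simp [h]
    · simp only [if_neg h]
      exact mul_le_mul_right (pow_le_pow_left' hr.le n) _
  have hfr : (G.fCount u u n₀ : ℝ≥0∞) * (↑r:ℝ≥0∞)^n₀ < (G.fCount u u n₀ : ℝ≥0∞) * L^n₀ := by
    refine (ENNReal.mul_lt_mul_iff_right ?_ (ENNReal.natCast_ne_top _)).2
      (ENNReal.pow_lt_pow_left (by omega) hr)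
    have hne0 : G.fCount u u n₀ ≠ 0 := by omega
    exact_mod_cast hne0
  have hrest_ne : (∑' n, if n = n₀ then 0 else (G.fCount u u n : ℝ≥0∞) * (↑r:ℝ≥0∞)^n) ≠ ⊤ :=
    ne_top_of_le_ne_top ENNReal.one_ne_top (le_trans hrest hRL_le)
  calc G.loopSum u ↑r
      = (G.fCount u u n₀ : ℝ≥0∞) * (↑r:ℝ≥0∞)^n₀ +
        ∑' n, if n = n₀ then 0 else (G.fCount u u n : ℝ≥0∞) * (↑r:ℝ≥0∞)^n := hdecr
    _ < (G.fCount u u n₀ : ℝ≥0∞) * L^n₀ +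
        ∑' n, if n = n₀ then 0 else (G.fCount u u n : ℝ≥0∞) * (↑r:ℝ≥0∞)^n :=
        ENNReal.add_lt_add_right hrest_ne hfr
    _ ≤ (G.fCount u u n₀ : ℝ≥0∞) * L^n₀ +
        ∑' n, if n = n₀ then 0 else (G.fCount u u n : ℝ≥0∞) * L^n := add_le_add_right hrest _
    _ = G.loopSum u L := hdecL.symm
    _ ≤ 1 := hFL

lemma le_pRadius_of_loopSum_lt_one (hfin : G.FiniteCounts) (hu : u ∈ G.verts)
    {r : ℝ≥0} (hF : G.loopSum u ↑r < 1) : (r : ℝ≥0∞) ≤ G.pRadius u u := by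
  classical
  set FR : ℝ := (G.loopSum u ↑r).toReal with hFRdef
  have hFR1 : FR < 1 := by
    have := (ENNReal.toReal_lt_toReal (ne_top_of_lt hF) ENNReal.one_ne_top).2 hF
    simpa using this
  have hFR0 : (0:ℝ) ≤ FR := ENNReal.toReal_nonneg
  set q : ℕ → ℝ := fun n => (G.pCount u u n : ℝ) * (r:ℝ)^n with hqdef
  have hq0 : ∀ n, 0 ≤ q n := fun n => by positivity
  have hFbound : ∀ s : Finset ℕ, ∑ m ∈ s, (G.fCount u u m : ℝ) * (r:ℝ)^m ≤ FR := by
    intro s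
    have h1 : ∑ m ∈ s, (G.fCount u u m : ℝ≥0∞) * (↑r:ℝ≥0∞)^m ≤ G.loopSum u ↑r :=
      ENNReal.sum_le_tsum s
    have h2 := ENNReal.toReal_mono (ne_top_of_lt hF) h1
    rw [ENNReal.toReal_sum (fun m _ => ENNReal.mul_ne_top (ENNReal.natCast_ne_top _)
      (ENNReal.pow_ne_top ENNReal.coe_ne_top))] at h2
    simpa [ENNReal.toReal_mul, ENNReal.toReal_pow] using h2
  have hrange : ∀ N : ℕ, Finset.range (N+1) = insert 0 (Finset.Icc 1 N) := by
    intro N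
    ext m
    simp only [Finset.mem_range, Finset.mem_insert, Finset.mem_Icc]
    omega
  have hS : ∀ N : ℕ, ∑ n ∈ Finset.range (N+1), q n ≤
      1 + FR * ∑ n ∈ Finset.range (N+1), q n := by
    intro N
    have hq00 : q 0 = 1 := by simp [hqdef, pCount_zero hu]
    have hterm : ∀ n ∈ Finset.Icc 1 N, q n =
        ∑ m ∈ Finset.Icc 1 n, ((G.fCount u u m : ℝ) * (r:ℝ)^m) * q (n-m) := by
      intro n hn
      have h := renewal hfin hu (Finset.mem_Icc.1 hn).1 (n := n)
      simp only [hqdef]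
      rw [h]
      push_cast
      rw [Finset.sum_mul]
      refine Finset.sum_congr rfl fun m hm => ?_
      rw [show (r:ℝ)^n = (r:ℝ)^m * (r:ℝ)^(n-m) by
        rw [← pow_add]; congr 1; have := Finset.mem_Icc.1 hm; omega]
      ring
    have hmain : ∑ n ∈ Finset.Icc 1 N, q n ≤ FR * ∑ n ∈ Finset.range (N+1), q n := by
      rw [Finset.sum_congr rfl hterm]
      classical
      set e : (_ : ℕ) × ℕ → ℕ × ℕ := fun p => (p.2, p.1 - p.2) with he
      have hinj : ∀ p ∈ (Finset.Icc 1 N).sigma (fun n => Finset.Icc 1 n),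
          ∀ p' ∈ (Finset.Icc 1 N).sigma (fun n => Finset.Icc 1 n), e p = e p' → p = p' := by
        intro p hp p' hp' h
        obtain ⟨hp1, hp2⟩ := Finset.mem_sigma.1 hp
        obtain ⟨hp1', hp2'⟩ := Finset.mem_sigma.1 hp'
        have e1 : p.2 = p'.2 := congrArg Prod.fst h
        have e2 : p.1 - p.2 = p'.1 - p'.2 := congrArg Prod.snd h
        have m1 := Finset.mem_Icc.1 hp2
        have m2 := Finset.mem_Icc.1 hp2'
        have : p.1 = p'.1 := by omega
        exact Sigma.ext this (by rw [e1])
      have himg : ((Finset.Icc 1 N).sigma (fun n => Finset.Icc 1 n)).image e ⊆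
          Finset.Icc 1 N ×ˢ Finset.range (N+1) := by
        intro pr hpr
        obtain ⟨⟨n1, m1⟩, hp, rfl⟩ := Finset.mem_image.1 hpr
        obtain ⟨hp1, hp2⟩ := Finset.mem_sigma.1 hp
        simp only [Finset.mem_Icc] at hp1 hp2
        simp only [he, Finset.mem_product, Finset.mem_Icc, Finset.mem_range]
        omega
      calc ∑ n ∈ Finset.Icc 1 N, ∑ m ∈ Finset.Icc 1 n, ((G.fCount u u m : ℝ) * (r:ℝ)^m) * q (n-m)
          = ∑ p ∈ (Finset.Icc 1 N).sigma (fun n => Finset.Icc 1 n),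
              ((G.fCount u u p.2 : ℝ) * (r:ℝ)^p.2) * q (p.1 - p.2) := by
            rw [Finset.sum_sigma]
        _ = ∑ pr ∈ ((Finset.Icc 1 N).sigma (fun n => Finset.Icc 1 n)).image e,
              ((G.fCount u u pr.1 : ℝ) * (r:ℝ)^pr.1) * q pr.2 := by
            rw [Finset.sum_image hinj]
        _ ≤ ∑ pr ∈ Finset.Icc 1 N ×ˢ Finset.range (N+1),
              ((G.fCount u u pr.1 : ℝ) * (r:ℝ)^pr.1) * q pr.2 := by
            refine Finset.sum_le_sum_of_subset_of_nonneg himg fun pr _ _ => ?_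
            have := hq0 pr.2
            positivity
        _ = (∑ m ∈ Finset.Icc 1 N, (G.fCount u u m : ℝ) * (r:ℝ)^m) *
              (∑ n ∈ Finset.range (N+1), q n) := by
            rw [Finset.sum_mul_sum, ← Finset.sum_product']
        _ ≤ FR * ∑ n ∈ Finset.range (N+1), q n := by
            refine mul_le_mul_of_nonneg_right (hFbound _) ?_
            exact Finset.sum_nonneg fun n _ => hq0 n
    calc ∑ n ∈ Finset.range (N+1), q n
        = 1 + ∑ n ∈ Finset.Icc 1 N, q n := by
          rw [hrange N, Finset.sum_insert (by simp), hq00]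
      _ ≤ 1 + FR * ∑ n ∈ Finset.range (N+1), q n := by
          exact add_le_add_right hmain 1
  set C : ℝ := (1 - FR)⁻¹ with hCdef
  have h1FR : (0:ℝ) < 1 - FR := by linarith
  have hC : ∀ N, ∑ n ∈ Finset.range (N+1), q n ≤ C := by
    intro N
    rw [hCdef, inv_eq_one_div, le_div_iff₀ h1FR]
    nlinarith [hS N]
  have hbound : ∀ n, q n ≤ C := fun n =>
    le_trans (Finset.single_le_sum (fun i _ => hq0 i) (Finset.self_mem_range_succ n)) (hC n)
  rw [OGraph.pRadius, OGraph.radius]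
  exact le_iSup_of_le r (le_iSup_of_le ⟨C, hbound⟩ le_rfl)

end RLAux


namespace RLAux
open OGraph
variable {V : Type*} {G : OGraph V} {u : V}

lemma exists_lt (hloop : ∃ n, 1 ≤ n ∧ 1 ≤ G.fCount u u n) {L : ℝ≥0∞}
    (hF : 1 < G.loopSum u L) : ∃ r : ℝ≥0, ↑r < L ∧ 1 < G.loopSum u ↑r := by
  obtain ⟨n₀, hn₀, hf₀⟩ := hloop
  have hL0 : L ≠ 0 := by
    rintro rfl
    rw [loopSum_zero] at hF
    exact absurd hF (by simp)
  rcases eq_or_ne L ⊤ with rfl | hLt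
  · refine ⟨2, by simp, ?_⟩
    have hc2 : ((2:ℝ≥0):ℝ≥0∞) = 2 := by norm_num
    have h2 : (2:ℝ≥0∞) ≤ (G.fCount u u n₀ : ℝ≥0∞) * ((2:ℝ≥0):ℝ≥0∞)^n₀ := by
      rw [hc2]
      calc (2:ℝ≥0∞) = 1 * 2^1 := by norm_num
        _ ≤ (G.fCount u u n₀ : ℝ≥0∞) * 2^n₀ := by
            refine mul_le_mul' ?_ (pow_le_pow_right₀ one_le_two hn₀)
            exact_mod_cast hf₀
    calc (1:ℝ≥0∞) < 2 := by norm_num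
      _ ≤ (G.fCount u u n₀ : ℝ≥0∞) * ((2:ℝ≥0):ℝ≥0∞)^n₀ := h2
      _ ≤ G.loopSum u ((2:ℝ≥0):ℝ≥0∞) := ENNReal.le_tsum n₀
  · lift L to ℝ≥0 using hLt with l
    have hl0 : l ≠ 0 := by simpa using hL0
    have hlpos : (0:ℝ) < (l:ℝ) :=
      lt_of_le_of_ne l.coe_nonneg (by exact_mod_cast (Ne.symm hl0))
    rw [OGraph.loopSum, ENNReal.tsum_eq_iSup_sum, lt_iSup_iff] at hF
    obtain ⟨s, hs⟩ := hF
    set g : ℝ → ℝ := fun y => ∑ n ∈ s, (G.fCount u u n : ℝ) * y^n with hg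
    have hcont : Continuous g :=
      continuous_finset_sum s (fun n _ => continuous_const.mul (continuous_pow n))
    have hgl : 1 < g (l:ℝ) := by
      have hne : ∀ n ∈ s, (G.fCount u u n : ℝ≥0∞) * ((l:ℝ≥0):ℝ≥0∞)^n ≠ ⊤ := fun n _ =>
        ENNReal.mul_ne_top (ENNReal.natCast_ne_top _) (ENNReal.pow_ne_top ENNReal.coe_ne_top)
      have h1 := ENNReal.toReal_strict_mono (by
        rw [ne_eq, ENNReal.sum_eq_top]
        push_neg
        exact hne) hs
      rw [ENNReal.toReal_sum hne] at h1
      simpa [ENNReal.toReal_mul, ENNReal.toReal_pow, hg] using h1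
    have hopen : IsOpen {y : ℝ | 1 < g y} := isOpen_lt continuous_const hcont
    rw [Metric.isOpen_iff] at hopen
    obtain ⟨ε, hε, hball⟩ := hopen (l:ℝ) hgl
    set δ : ℝ := min (ε/2) ((l:ℝ)/2) with hδdef
    have hδ : 0 < δ := lt_min (by linarith) (by linarith)
    have hδl : δ ≤ (l:ℝ)/2 := min_le_right _ _
    have hδε : δ < ε := lt_of_le_of_lt (min_le_left _ _) (by linarith)
    set x : ℝ := (l:ℝ) - δ with hxdef
    have hx0 : 0 ≤ x := by rw [hxdef]; linarith
    have hxl : x < (l:ℝ) := by rw [hxdef]; linarith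
    have hxg : 1 < g x := by
      refine hball ?_
      rw [Metric.mem_ball, Real.dist_eq, hxdef]
      rw [abs_of_nonpos (by linarith)]
      linarith
    set xr : ℝ≥0 := ⟨x, hx0⟩ with hxr
    have hxrx : (xr : ℝ) = x := rfl
    refine ⟨xr, ?_, ?_⟩
    · rw [ENNReal.coe_lt_coe]
      exact_mod_cast hxl
    · have hsum : ∑ n ∈ s, (G.fCount u u n : ℝ≥0∞) * (xr:ℝ≥0∞)^n =
          (((∑ n ∈ s, (G.fCount u u n : ℝ≥0) * xr^n) : ℝ≥0) : ℝ≥0∞) := by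
        push_cast
        rfl
      have hlt1 : (1:ℝ) < ((∑ n ∈ s, (G.fCount u u n : ℝ≥0) * xr^n : ℝ≥0) : ℝ) := by
        push_cast
        rw [hxrx] at *
        exact hxg
      have hlt2 : (1:ℝ≥0∞) < ∑ n ∈ s, (G.fCount u u n : ℝ≥0∞) * (xr:ℝ≥0∞)^n := by
        rw [hsum]
        exact_mod_cast hlt1
      exact lt_of_lt_of_le hlt2 (ENNReal.sum_le_tsum s)

end RLAux

/-- If `u` lies on at least one loop, then `R(G) < L_{uu}(G)` if and only if
`∑_{n ≥ 1} f_{uu}^G(n) L_{uu}(G)ⁿ > 1` (the sum being taken in `[0, ∞]`). -/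
theorem R_lt_L_iff_loopSum_gt_one {V : Type*} [Countable V] (G : OGraph V)
    (hconn : G.Connected) (hfin : G.FiniteCounts)
    (u : V) (hu : u ∈ G.verts) (hloop : ∃ n, 1 ≤ n ∧ 1 ≤ G.fCount u u n) :
    G.gRadius < G.fRadius u u ↔ 1 < G.loopSum u (G.fRadius u u) := by
  constructor
  · intro hRL
    by_contra hnot
    push_neg at hnot
    have h1 : G.fRadius u u ≤ G.pRadius u u :=
      ENNReal.le_of_forall_nnreal_lt fun r hr =>
        RLAux.le_pRadius_of_loopSum_lt_one hfin hu (RLAux.loopSum_lt_one hloop hnot hr)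
    have hle : G.fRadius u u ≤ G.gRadius := by
      rw [OGraph.gRadius]
      exact le_iInf₂ fun v hv => le_iInf₂ fun w hw =>
        h1.trans (RLAux.pRadius_le hfin hconn hu hv hw)
    exact absurd hRL (not_lt.2 hle)
  · intro hF
    obtain ⟨r, hrL, hr1⟩ := RLAux.exists_lt hloop hF
    have htop := RLAux.tsum_p_top hfin hu hr1.le
    have h2 : G.pRadius u u ≤ ↑r := RLAux.pRadius_le_of_top htop
    have h3 : G.gRadius ≤ G.pRadius u u := by
      rw [OGraph.gRadius]
      exact iInf₂_le_of_le u hu (iInf₂_le u hu)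
    exact lt_of_le_of_lt (h3.trans h2) hrL
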